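/- Let C be a d×d real positive definite matrix and let 𝒰(A) denote the upper-triangular part of a square matrix A (entries below the diagonal set to zero). If X ∈ ℝ^{d×m} satisfies CX = X·𝒰(XᵀCX), then XᵀX is a diagonal matrix whose diagonal entries are each 0 or 1, and every nonzero column of X is a unit-norm eigenvector of C. -/

import Mathlib

open Matrix

/-- The upper-triangular part operator `𝒰`: keeps entries on and above the
diagonal, zeroes the rest. -/
def utri {m : ℕ} (A : Matrix (Fin m) (Fin m) ℝ) : Matrix (Fin m) (Fin m) ℝ :=
  Matrix.of fun i j => if i ≤ j then A i j else 0

theorem sanger_fixed_point_characterization (d m : ℕ)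
    (C : Matrix (Fin d) (Fin d) ℝ) (hC : C.PosDef)
    (X : Matrix (Fin d) (Fin m) ℝ)
    (hfix : C * X = X * utri (Xᵀ * C * X)) :
    (∀ i j : Fin m, i ≠ j → (Xᵀ * X) i j = 0) ∧
    (∀ j : Fin m, (Xᵀ * X) j j = 0 ∨ (Xᵀ * X) j j = 1) ∧
    (∀ j : Fin m, (fun i => X i j) ≠ 0 →
      ((fun i => X i j) ⬝ᵥ (fun i => X i j) = 1 ∧
        ∃ l : ℝ, C.mulVec (fun i => X i j) = l • (fun i => X i j))) := by
  classical
  set g : Fin m → Fin d → ℝ := fun j i => X i j with hg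
  set b : Fin m → Fin m → ℝ := fun i j => g i ⬝ᵥ C.mulVec (g j) with hbdef
  have hCsymm : Cᵀ = C := hC.1
  have hbsymm : ∀ i j, b i j = b j i := by
    intro i j
    simp only [hbdef]
    rw [dotProduct_mulVec, ← mulVec_transpose, hCsymm, dotProduct_comm]
  -- b equals entries of XᵀCX
  have hb : ∀ i j, (Xᵀ * C * X) i j = b i j := by
    intro i j
    simp only [hbdef, Matrix.mul_apply, Matrix.transpose_apply, Matrix.mulVec,
      dotProduct, Finset.sum_mul, Finset.mul_sum, hg]
    rw [Finset.sum_comm]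
    apply Finset.sum_congr rfl; intro k _
    apply Finset.sum_congr rfl; intro l _
    ring
  -- column fixed-point equation
  have hcol : ∀ j, C.mulVec (g j) = ∑ i : Fin m, (if i ≤ j then b i j else 0) • g i := by
    intro j
    funext k
    have h := congrFun (congrFun hfix k) j
    simp only [Matrix.mul_apply, utri, Matrix.of_apply, hb] at h
    have hL : (∑ i, C k i * X i j) = C.mulVec (g j) k := by
      simp [Matrix.mulVec, dotProduct, hg]
    rw [hL] at h
    rw [h]
    rw [Finset.sum_apply]
    apply Finset.sum_congr rfl
    intro i _
    by_cases hij : i ≤ j <;> simp [hij, hg, mul_comm]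
  -- dotted version
  have hdot : ∀ (v : Fin d → ℝ) (j : Fin m),
      v ⬝ᵥ C.mulVec (g j)
        = ∑ i : Fin m, (if i ≤ j then b i j * (v ⬝ᵥ g i) else 0) := by
    intro v j
    rw [hcol j]
    simp only [dotProduct, Finset.sum_apply, Pi.smul_apply, smul_eq_mul,
      Finset.mul_sum]
    rw [Finset.sum_comm]
    refine Finset.sum_congr rfl fun i _ => ?_
    by_cases hij : i ≤ j
    · simp only [if_pos hij, Finset.mul_sum]
      refine Finset.sum_congr rfl fun k _ => ?_
      ring
    · simp [hij]
  -- split off the j term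
  have hdot' : ∀ (v : Fin d → ℝ) (j : Fin m),
      v ⬝ᵥ C.mulVec (g j)
        = b j j * (v ⬝ᵥ g j)
          + ∑ i ∈ Finset.univ.erase j, (if i ≤ j then b i j * (v ⬝ᵥ g i) else 0) := by
    intro v j
    rw [hdot v j, ← Finset.add_sum_erase _ _ (Finset.mem_univ j), if_pos le_rfl]
  have hpos : ∀ j, g j ≠ 0 → 0 < b j j := by
    intro j hj
    have := hC.dotProduct_mulVec_pos hj
    simpa [hbdef] using this
  -- the key invariant, by strong induction on j
  have key : ∀ n : ℕ, ∀ j : Fin m, (j : ℕ) < n →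
      ((∀ i, i < j → g i ⬝ᵥ g j = 0) ∧
       (g j = 0 ∨ (g j ⬝ᵥ g j = 1 ∧ C.mulVec (g j) = b j j • g j))) := by
    intro n
    induction n with
    | zero => intro j hj; omega
    | succ n ih =>
      intro j hj
      have IH : ∀ i, i < j →
          ((∀ k, k < i → g k ⬝ᵥ g i = 0) ∧
           (g i = 0 ∨ (g i ⬝ᵥ g i = 1 ∧ C.mulVec (g i) = b i i • g i))) := by
        intro i hi
        exact ih i (by omega)
      -- orthogonality among earlier columns
      have horth : ∀ i k, i < j → k < j → i ≠ k → g i ⬝ᵥ g k = 0 := by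
        intro i k hi hk hik
        rcases lt_or_gt_of_ne hik with h | h
        · exact (IH k hk).1 i h
        · rw [dotProduct_comm]; exact (IH i hi).1 k h
      -- step 1: b j j * (g i ⬝ᵥ g j) = 0 for i < j
      have hstep : ∀ i, i < j → b j j * (g i ⬝ᵥ g j) = 0 := by
        intro i hi
        by_cases hzi : g i = 0
        · simp [hzi]
        have hii : g i ⬝ᵥ g i = 1 := ((IH i hi).2.resolve_left hzi).1
        have h := hdot' (g i) j
        have hsum : (∑ k ∈ Finset.univ.erase j,
            (if k ≤ j then b k j * (g i ⬝ᵥ g k) else 0)) = b i j := by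
          rw [Finset.sum_eq_single i]
          · simp [hi.le, hii]
          · intro k hk hki
            have hkj : k ≠ j := Finset.ne_of_mem_erase hk
            by_cases hle : k ≤ j
            · have hkj' : k < j := lt_of_le_of_ne hle hkj
              rw [if_pos hle, horth i k hi hkj' (Ne.symm hki), mul_zero]
            · rw [if_neg hle]
          · intro hmem
            exact absurd (Finset.mem_erase.mpr ⟨ne_of_lt hi, Finset.mem_univ i⟩) hmem
        rw [hsum] at h
        have : g i ⬝ᵥ C.mulVec (g j) = b i j := rfl
        rw [this] at h
        rw [dotProduct_comm] at h ⊢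
        linarith
      by_cases hzj : g j = 0
      · constructor
        · intro i _; simp [hzj]
        · exact Or.inl hzj
      · have hbjj : 0 < b j j := hpos j hzj
        have horthj : ∀ i, i < j → g i ⬝ᵥ g j = 0 := by
          intro i hi
          have := hstep i hi
          rcases mul_eq_zero.mp this with h | h
          · exact absurd h (ne_of_gt hbjj)
          · exact h
        refine ⟨horthj, Or.inr ?_⟩
        -- eigen equation
        have heig : C.mulVec (g j) = b j j • g j := by
          rw [hcol j]
          rw [← Finset.add_sum_erase _ _ (Finset.mem_univ j), if_pos le_rfl]
          have hzero : (∑ i ∈ Finset.univ.erase j,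
              (if i ≤ j then b i j else 0) • g i) = 0 := by
            apply Finset.sum_eq_zero
            intro i hi
            have hij : i ≠ j := Finset.ne_of_mem_erase hi
            by_cases hle : i ≤ j
            · have hlt : i < j := lt_of_le_of_ne hle hij
              by_cases hzi : g i = 0
              · simp [hzi]
              · have heigi := ((IH i hlt).2.resolve_left hzi).2
                have : b i j = b i i * (g i ⬝ᵥ g j) := by
                  rw [hbsymm i j]
                  show g j ⬝ᵥ C.mulVec (g i) = _
                  rw [heigi, dotProduct_smul, smul_eq_mul,
                    dotProduct_comm (g j) (g i)]
                rw [if_pos hle, this, horthj i hlt, mul_zero, zero_smul]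
            · rw [if_neg hle, zero_smul]
          rw [hzero, add_zero]
        have hnorm : g j ⬝ᵥ g j = 1 := by
          have h1 : b j j = b j j * (g j ⬝ᵥ g j) := by
            conv_lhs => rw [show b j j = g j ⬝ᵥ C.mulVec (g j) from rfl, heig,
              dotProduct_smul, smul_eq_mul]
          exact mul_left_cancel₀ (ne_of_gt hbjj)
            (by rw [mul_one, ← h1])
        exact ⟨hnorm, heig⟩
  have key' : ∀ j : Fin m,
      (∀ i, i < j → g i ⬝ᵥ g j = 0) ∧
      (g j = 0 ∨ (g j ⬝ᵥ g j = 1 ∧ C.mulVec (g j) = b j j • g j)) :=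
    fun j => key ((j : ℕ) + 1) j (Nat.lt_succ_self _)
  have hXX : ∀ i j : Fin m, (Xᵀ * X) i j = g i ⬝ᵥ g j := by
    intro i j
    simp [Matrix.mul_apply, dotProduct, hg]
  refine ⟨?_, ?_, ?_⟩
  · intro i j hij
    rw [hXX]
    rcases lt_or_gt_of_ne hij with h | h
    · exact (key' j).1 i h
    · rw [dotProduct_comm]; exact (key' i).1 j h
  · intro j
    rw [hXX]
    rcases (key' j).2 with h | h
    · left; simp [h]
    · right; exact h.1
  · intro j hj
    have hgj : (fun i => X i j) = g j := rfl
    rw [hgj] at hj ⊢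
    rcases (key' j).2 with h | h
    · exact absurd h hj
    · exact ⟨h.1, ⟨b j j, h.2⟩⟩
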